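/- Let N be a normal subgroup of a nontrivial finite group G with N ⊆ Φ(G). Then ι(G/N) = ι(G). -/

import Mathlib

/-- The intersection number of a group: the minimum number of maximal subgroups
whose intersection equals the Frattini subgroup. -/
noncomputable def interNum (G : Type*) [Group G] : ℕ :=
  sInf {n | ∃ s : Finset (Subgroup G), s.card = n ∧ (∀ M ∈ s, IsCoatom M) ∧
    s.inf id = frattini G}

section Aux

variable {G : Type*} [Group G] {H : Type*} [Group H]

lemma comap_finset_inf' (f : G →* H) {ι : Type*} (t : Finset ι) (g : ι → Subgroup H) :
    (t.inf g).comap f = t.inf fun i => (g i).comap f := by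
  classical
  induction t using Finset.induction with
  | empty => simp
  | insert _ _ h ih => simp [Subgroup.comap_inf, ih]

lemma comap_finset_inf (f : G →* H) (t : Finset (Subgroup H)) :
    (t.inf id).comap f = t.inf fun M => M.comap f := by
  classical
  induction t using Finset.induction with
  | empty => simp
  | insert _ _ h ih => simp [Subgroup.comap_inf, ih]

lemma isCoatom_map_of_ker_le {f : G →* H} (hf : Function.Surjective f)
    {M : Subgroup G} (hker : f.ker ≤ M) (hM : IsCoatom M) :
    IsCoatom (M.map f) := by
  have hcm : (M.map f).comap f = M := Subgroup.comap_map_eq_self hker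
  constructor
  · intro htop
    apply hM.1
    rw [← hcm, htop, Subgroup.comap_top]
  · intro b hb
    have hMb : M < b.comap f := by
      refine lt_of_le_of_ne (hcm ▸ Subgroup.comap_mono hb.le) ?_
      intro h
      apply hb.ne
      rw [← Subgroup.map_comap_eq_self_of_surjective hf b, ← h]
    have := hM.2 _ hMb
    rw [← Subgroup.map_comap_eq_self_of_surjective hf b, this]
    exact Subgroup.map_top_of_surjective f hf

lemma comap_frattini_mk' (N : Subgroup G) [N.Normal] (hN : N ≤ frattini G) :
    (frattini (G ⧸ N)).comap (QuotientGroup.mk' N) = frattini G := by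
  refine le_antisymm ?_ (frattini_le_comap_frattini_of_surjective
    (QuotientGroup.mk'_surjective N))
  show _ ≤ Order.radical (Subgroup G)
  rw [Order.radical]
  simp only [le_iInf_iff]
  intro K hK
  have hNK : N ≤ K := hN.trans (frattini_le_coatom hK)
  have hco : IsCoatom (K.map (QuotientGroup.mk' N)) :=
    isCoatom_map_of_ker_le (QuotientGroup.mk'_surjective N)
      (by rwa [QuotientGroup.ker_mk']) hK
  calc (frattini (G ⧸ N)).comap (QuotientGroup.mk' N)
      ≤ (K.map (QuotientGroup.mk' N)).comap (QuotientGroup.mk' N) :=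
        Subgroup.comap_mono (frattini_le_coatom hco)
    _ = K := Subgroup.comap_map_eq_self (by rwa [QuotientGroup.ker_mk'])

end Aux

theorem interNum_quotient (G : Type*) [Group G] [Finite G] [Nontrivial G]
    (N : Subgroup G) [N.Normal] (hN : N ≤ frattini G) :
    interNum (G ⧸ N) = interNum G := by
  classical
  set f := QuotientGroup.mk' N with hf
  have hsurj : Function.Surjective f := QuotientGroup.mk'_surjective N
  have hker : f.ker = N := QuotientGroup.ker_mk' N
  have hcomapinj : Function.Injective (Subgroup.comap f) := Subgroup.comap_injective hsurj
  unfold interNum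
  congr 1
  ext n
  constructor
  · rintro ⟨t, hcard, hcoat, hinf⟩
    refine ⟨t.image (Subgroup.comap f), ?_, ?_, ?_⟩
    · rw [Finset.card_image_of_injective _ hcomapinj, hcard]
    · intro M hM
      obtain ⟨K, hK, rfl⟩ := Finset.mem_image.mp hM
      exact Subgroup.isCoatom_comap_of_surjective hsurj (hcoat K hK)
    · rw [Finset.inf_image]
      have : t.inf (id ∘ Subgroup.comap f) = (t.inf id).comap f := by
        rw [comap_finset_inf]; rfl
      rw [this, hinf, hf, comap_frattini_mk' N hN]
  · rintro ⟨s, hcard, hcoat, hinf⟩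
    have hmem : ∀ M ∈ s, f.ker ≤ M := fun M hM => by
      rw [hker]; exact hN.trans (frattini_le_coatom (hcoat M hM))
    refine ⟨s.image (Subgroup.map f), ?_, ?_, ?_⟩
    · rw [Finset.card_image_of_injOn, hcard]
      intro a ha b hb hab
      rw [← Subgroup.comap_map_eq_self (hmem a ha), hab,
        Subgroup.comap_map_eq_self (hmem b hb)]
    · intro M hM
      obtain ⟨K, hK, rfl⟩ := Finset.mem_image.mp hM
      exact isCoatom_map_of_ker_le hsurj (hmem K hK) (hcoat K hK)
    · apply hcomapinj
      rw [hf, comap_frattini_mk' N hN, ← hf, Finset.inf_image, comap_finset_inf']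
      rw [← hinf]
      apply Finset.inf_congr rfl
      intro M hM
      exact Subgroup.comap_map_eq_self (hmem M hM)
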